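/- P_6^3 is, up to isomorphism, the unique planar maximal 3-degenerate graph of order 6. -/

import Mathlib

open SimpleGraph

/-- `G` contains a subdivision of `H`: there are branch vertices (an injection of `V(H)`
into `V(G)`) and internally disjoint paths in `G` corresponding to the edges of `H`. -/
def SimpleGraph.ContainsSubdivision {α β : Type*} (G : SimpleGraph α) (H : SimpleGraph β) :
    Prop :=
  ∃ (f : β ↪ α) (p : ∀ ⦃u v : β⦄, H.Adj u v → G.Walk (f u) (f v)),
    (∀ ⦃u v : β⦄ (h : H.Adj u v), (p h).IsPath) ∧
    (∀ ⦃u v : β⦄ (h : H.Adj u v) (x : β), f x ∈ (p h).support → x = u ∨ x = v) ∧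
    (∀ ⦃u v u' v' : β⦄ (h : H.Adj u v) (h' : H.Adj u' v'),
      s(u, v) ≠ s(u', v') → ∀ x, x ∈ (p h).support → x ∈ (p h').support →
        (x = f u ∨ x = f v) ∧ (x = f u' ∨ x = f v'))

/-- The third power of the path on `n` vertices: `v i` is adjacent to `v j`
iff `1 ≤ |i - j| ≤ 3`. -/
def pathPower3 (n : ℕ) : SimpleGraph (Fin n) :=
  SimpleGraph.fromRel (fun i j => (i : ℕ) < j ∧ (j : ℕ) ≤ i + 3)

/-- `H` is a maximal 3-degenerate graph of order `n`: its vertices can be ordered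
`v 0, …, v (n-1)` so that the first three induce a triangle and every later vertex is
adjacent to exactly 3 earlier vertices. -/
def IsMaxThreeDegenerate {V : Type*} (H : SimpleGraph V) (n : ℕ) : Prop :=
  3 ≤ n ∧ ∃ v : Fin n ≃ V,
    (∀ i j : Fin n, (i : ℕ) < 3 → (j : ℕ) < 3 → i ≠ j → H.Adj (v i) (v j)) ∧
    ∀ i : Fin n, 3 ≤ (i : ℕ) →
      Nat.card {j : Fin n // j < i ∧ H.Adj (v j) (v i)} = 3

/-- A graph is planar iff it contains no subdivision of `K₅` nor of `K₃,₃`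
(Kuratowski's characterization). -/
def IsPlanar {α : Type*} (G : SimpleGraph α) : Prop :=
  ¬ G.ContainsSubdivision (completeGraph (Fin 5)) ∧
  ¬ G.ContainsSubdivision (completeBipartiteGraph (Fin 3) (Fin 3))

instance instDecP6 : DecidableRel (pathPower3 6).Adj :=
  fun a b => decidable_of_iff' _ (SimpleGraph.fromRel_adj _ a b)

def cand (k a b : Fin 6) : SimpleGraph (Fin 6) :=
  SimpleGraph.fromRel (fun i j => i < j ∧
    ((j : ℕ) ≤ 3 ∨ ((j : ℕ) = 4 ∧ i ≠ k) ∨ ((j : ℕ) = 5 ∧ i ≠ a ∧ i ≠ b)))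

instance instDecCand (k a b : Fin 6) : DecidableRel (cand k a b).Adj :=
  fun x y => decidable_of_iff' _ (SimpleGraph.fromRel_adj _ x y)

lemma cand_adj (k a b : Fin 6) (i j : Fin 6) (hij : i < j) :
    (cand k a b).Adj i j ↔
      ((j : ℕ) ≤ 3 ∨ ((j : ℕ) = 4 ∧ i ≠ k) ∨ ((j : ℕ) = 5 ∧ i ≠ a ∧ i ≠ b)) := by
  rw [cand, SimpleGraph.fromRel_adj]
  constructor
  · rintro ⟨-, ⟨-, h⟩ | ⟨h', -⟩⟩
    · exact h
    · exact absurd h' (asymm hij)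
  · intro h
    exact ⟨hij.ne, Or.inl ⟨hij, h⟩⟩

lemma graph_eq_of_lt {G G' : SimpleGraph (Fin 6)}
    (h : ∀ i j : Fin 6, i < j → (G.Adj i j ↔ G'.Adj i j)) : G = G' := by
  ext i j
  rcases lt_trichotomy i j with hlt | heq | hgt
  · exact h i j hlt
  · subst heq; simp
  · rw [G.adj_comm, G'.adj_comm]; exact h j i hgt

lemma structure_of_deg {G : SimpleGraph (Fin 6)}
    (htri : ∀ i j : Fin 6, (i : ℕ) < 3 → (j : ℕ) < 3 → i ≠ j → G.Adj i j)
    (hdeg : ∀ i : Fin 6, 3 ≤ (i : ℕ) →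
      Nat.card {j : Fin 6 // j < i ∧ G.Adj j i} = 3) :
    ∃ k a b : Fin 6, (k : ℕ) < 4 ∧ (a : ℕ) < 5 ∧ (b : ℕ) < 5 ∧ a ≠ b ∧
      G = cand k a b := by
  classical
  have hfil : ∀ i : Fin 6, 3 ≤ (i : ℕ) →
      (Finset.univ.filter fun j => j < i ∧ G.Adj j i).card = 3 := by
    intro i hi
    have h := hdeg i hi
    rwa [Nat.card_eq_fintype_card, Fintype.card_subtype] at h
  -- i = 3
  have h3 := hfil 3 (by decide)
  have hsub3 : (Finset.univ.filter fun j => j < (3:Fin 6) ∧ G.Adj j 3) ⊆ {0,1,2} := by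
    intro x hx
    rw [Finset.mem_filter] at hx
    have hx3 : x < (3:Fin 6) := hx.2.1
    have hmem : ∀ y : Fin 6, y < (3:Fin 6) → y ∈ ({0,1,2} : Finset (Fin 6)) := by decide
    exact hmem x hx3
  have he3 : (Finset.univ.filter fun j => j < (3:Fin 6) ∧ G.Adj j 3) = {0,1,2} :=
    Finset.eq_of_subset_of_card_le hsub3 (by rw [h3]; decide)
  have h3adj : ∀ j : Fin 6, j < 3 → G.Adj j 3 := by
    intro j hj
    have hjm : j ∈ ({0,1,2} : Finset (Fin 6)) := by
      have hmem : ∀ y : Fin 6, y < (3:Fin 6) → y ∈ ({0,1,2} : Finset (Fin 6)) := by decide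
      exact hmem j hj
    rw [← he3, Finset.mem_filter] at hjm
    exact hjm.2.2
  -- i = 4
  have h4 := hfil 4 (by decide)
  have hsub4 : (Finset.univ.filter fun j => j < (4:Fin 6) ∧ G.Adj j 4) ⊆ {0,1,2,3} := by
    intro x hx
    rw [Finset.mem_filter] at hx
    have hx4 : x < (4:Fin 6) := hx.2.1
    have hmem : ∀ y : Fin 6, y < (4:Fin 6) → y ∈ ({0,1,2,3} : Finset (Fin 6)) := by decide
    exact hmem x hx4
  have hd4 : (({0,1,2,3} : Finset (Fin 6)) \
      (Finset.univ.filter fun j => j < (4:Fin 6) ∧ G.Adj j 4)).card = 1 := by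
    rw [Finset.card_sdiff_of_subset hsub4, h4]
    decide
  obtain ⟨k, hk⟩ := Finset.card_eq_one.mp hd4
  have hkT : k ∈ ({0,1,2,3} : Finset (Fin 6)) :=
    (Finset.mem_sdiff.mp (hk ▸ Finset.mem_singleton_self k)).1
  have h4adj : ∀ j : Fin 6, j < 4 → (G.Adj j 4 ↔ j ≠ k) := by
    intro j hj
    have hjT : j ∈ ({0,1,2,3} : Finset (Fin 6)) := by
      have hmem : ∀ y : Fin 6, y < (4:Fin 6) → y ∈ ({0,1,2,3} : Finset (Fin 6)) := by decide
      exact hmem j hj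
    constructor
    · rintro hadj rfl
      have : j ∈ ({0,1,2,3} : Finset (Fin 6)) \ _ := hk ▸ Finset.mem_singleton_self j
      rw [Finset.mem_sdiff, Finset.mem_filter] at this
      exact this.2 ⟨Finset.mem_univ j, hj, hadj⟩
    · intro hjk
      have : j ∉ ({0,1,2,3} : Finset (Fin 6)) \
          (Finset.univ.filter fun j => j < (4:Fin 6) ∧ G.Adj j 4) := by
        rw [hk, Finset.mem_singleton]; exact hjk
      rw [Finset.mem_sdiff] at this
      push_neg at this
      have := this hjT
      rw [Finset.mem_filter] at this
      exact this.2.2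
  -- i = 5
  have h5 := hfil 5 (by decide)
  have hsub5 : (Finset.univ.filter fun j => j < (5:Fin 6) ∧ G.Adj j 5) ⊆ {0,1,2,3,4} := by
    intro x hx
    rw [Finset.mem_filter] at hx
    have hx5 : x < (5:Fin 6) := hx.2.1
    have hmem : ∀ y : Fin 6, y < (5:Fin 6) → y ∈ ({0,1,2,3,4} : Finset (Fin 6)) := by decide
    exact hmem x hx5
  have hd5 : (({0,1,2,3,4} : Finset (Fin 6)) \
      (Finset.univ.filter fun j => j < (5:Fin 6) ∧ G.Adj j 5)).card = 2 := by
    rw [Finset.card_sdiff_of_subset hsub5, h5]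
    decide
  obtain ⟨a, b, hab, hab2⟩ := Finset.card_eq_two.mp hd5
  have haT : a ∈ ({0,1,2,3,4} : Finset (Fin 6)) := by
    have h' : a ∈ ({a, b} : Finset (Fin 6)) := by simp
    rw [← hab2] at h'
    exact (Finset.mem_sdiff.mp h').1
  have hbT : b ∈ ({0,1,2,3,4} : Finset (Fin 6)) := by
    have h' : b ∈ ({a, b} : Finset (Fin 6)) := by simp
    rw [← hab2] at h'
    exact (Finset.mem_sdiff.mp h').1
  have h5adj : ∀ j : Fin 6, j < 5 → (G.Adj j 5 ↔ (j ≠ a ∧ j ≠ b)) := by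
    intro j hj
    have hjT : j ∈ ({0,1,2,3,4} : Finset (Fin 6)) := by
      have hmem : ∀ y : Fin 6, y < (5:Fin 6) → y ∈ ({0,1,2,3,4} : Finset (Fin 6)) := by decide
      exact hmem j hj
    constructor
    · intro hadj
      constructor
      · rintro rfl
        have h' : j ∈ ({j, b} : Finset (Fin 6)) := by simp
        rw [← hab2, Finset.mem_sdiff, Finset.mem_filter] at h'
        exact h'.2 ⟨Finset.mem_univ j, hj, hadj⟩
      · rintro rfl
        have h' : j ∈ ({a, j} : Finset (Fin 6)) := by simp
        rw [← hab2, Finset.mem_sdiff, Finset.mem_filter] at h'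
        exact h'.2 ⟨Finset.mem_univ j, hj, hadj⟩
    · intro hjab
      have : j ∉ ({0,1,2,3,4} : Finset (Fin 6)) \
          (Finset.univ.filter fun j => j < (5:Fin 6) ∧ G.Adj j 5) := by
        rw [hab2, Finset.mem_insert, Finset.mem_singleton]
        push_neg
        exact hjab
      rw [Finset.mem_sdiff] at this
      push_neg at this
      have := this hjT
      rw [Finset.mem_filter] at this
      exact this.2.2
  have bnd4 : ∀ x : Fin 6, x ∈ ({0,1,2,3} : Finset (Fin 6)) → (x:ℕ) < 4 := by decide
  have bnd5 : ∀ x : Fin 6, x ∈ ({0,1,2,3,4} : Finset (Fin 6)) → (x:ℕ) < 5 := by decide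
  refine ⟨k, a, b, bnd4 k hkT, bnd5 a haT, bnd5 b hbT, hab, ?_⟩
  apply graph_eq_of_lt
  intro i j hij
  rw [cand_adj _ _ _ _ _ hij]
  by_cases hj3 : (j : ℕ) ≤ 3
  · refine iff_of_true ?_ (Or.inl hj3)
    have hij' : (i : ℕ) < (j : ℕ) := hij
    rcases Nat.lt_or_ge (j : ℕ) 3 with h | h
    · exact htri i j (by omega) h (Fin.ne_of_lt hij)
    · have hj : j = 3 := Fin.ext (le_antisymm hj3 h)
      subst hj
      exact h3adj i hij
  · by_cases hj4 : (j : ℕ) = 4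
    · have hj : j = 4 := Fin.ext hj4
      subst hj
      rw [h4adj i hij]
      simp [show ((4:Fin 6):ℕ) = 4 from rfl]
    · have hj5 : (j : ℕ) = 5 := by omega
      have hj : j = 5 := Fin.ext hj5
      subst hj
      rw [h5adj i hij]
      simp [show ((5:Fin 6):ℕ) = 5 from rfl]

lemma walk_classify {α : Type*} {G : SimpleGraph α} {a b m : α} (hab : a ≠ b)
    (p : G.Walk a b) (hp : p.IsPath) [DecidableEq α]
    (hs : ∀ x ∈ p.support, x = a ∨ x = b ∨ x = m) :
    G.Adj a b ∨ (G.Adj a m ∧ G.Adj m b ∧ m ∈ p.support ∧ m ≠ a ∧ m ≠ b) := by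
  have hnd := hp.support_nodup
  have hlen : p.support.length ≤ 3 := by
    have h1 : p.support.toFinset.card = p.support.length := List.toFinset_card_of_nodup hnd
    have h2 : p.support.toFinset ⊆ {a, b, m} := by
      intro x hx
      simp only [List.mem_toFinset] at hx
      rcases hs x hx with h | h | h <;> simp [h]
    have h3 : ({a,b,m} : Finset α).card ≤ 3 := by
      apply le_trans (Finset.card_insert_le _ _)
      apply Nat.succ_le_succ
      apply le_trans (Finset.card_insert_le _ _)
      simp
    have h4 := Finset.card_le_card h2
    omega
  rw [Walk.length_support] at hlen
  cases p with
  | nil => exact absurd rfl hab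
  | cons h q =>
    rename_i c
    cases q with
    | nil => exact Or.inl h
    | cons h' q' =>
      rename_i d
      simp only [Walk.length_cons] at hlen
      have hq' : q'.length = 0 := by omega
      have hdb : d = b := Walk.eq_of_length_eq_zero hq'
      have hq'nil : q'.support = [d] := by
        cases q' with
        | nil => simp
        | cons => simp at hq'
      simp only [Walk.support_cons, hq'nil, hdb] at hnd hs
      have hca : c ≠ a := by rintro rfl; simp at hnd
      have hcb : c ≠ b := by rintro rfl; simp at hnd
      have hcm : c = m := by
        rcases hs c (by simp) with h1 | h1 | h1
        · exact absurd h1 hca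
        · exact absurd h1 hcb
        · exact h1
      subst hcm
      refine Or.inr ⟨h, hdb ▸ h', ?_, hca, hcb⟩
      simp [Walk.support_cons]

-- transfer of ContainsSubdivision along an isomorphism
lemma csub_transfer {α β γ : Type*} {G : SimpleGraph α} {G' : SimpleGraph β}
    (e : G ≃g G') {K : SimpleGraph γ} (h : G.ContainsSubdivision K) :
    G'.ContainsSubdivision K := by
  obtain ⟨f, p, h1, h2, h3⟩ := h
  have einj : Function.Injective e := e.toEquiv.injective
  refine ⟨f.trans e.toEquiv.toEmbedding, fun u v hadj => (p hadj).map e.toHom, ?_, ?_, ?_⟩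
  · intro u v hadj
    exact Walk.map_isPath_of_injective einj (h1 hadj)
  · intro u v hadj x hx
    erw [Walk.support_map, List.mem_map] at hx
    obtain ⟨y, hy, hyx⟩ := hx
    have : y = f x := einj hyx
    exact h2 hadj x (this ▸ hy)
  · intro u v u' v' hadj hadj' hne x hx hx'
    erw [Walk.support_map, List.mem_map] at hx hx'
    obtain ⟨y, hy, rfl⟩ := hx
    obtain ⟨y', hy', hyy⟩ := hx'
    have hyy2 : y' = y := einj hyy
    rw [hyy2] at hy'
    obtain ⟨c1, c2⟩ := h3 hadj hadj' hne y hy hy'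
    constructor
    · rcases c1 with rfl | rfl
      · exact Or.inl rfl
      · exact Or.inr rfl
    · rcases c2 with rfl | rfl
      · exact Or.inl rfl
      · exact Or.inr rfl

def Q33 (G : SimpleGraph (Fin 6)) : Prop :=
  ∃ f : Fin 3 ⊕ Fin 3 → Fin 6, Function.Injective f ∧
    ∀ a b : Fin 3, G.Adj (f (Sum.inl a)) (f (Sum.inr b))

def P5 (G : SimpleGraph (Fin 6)) : Prop :=
  ∃ f : Fin 5 → Fin 6, Function.Injective f ∧ ∃ m : Fin 6, (∀ i, f i ≠ m) ∧
    (∀ x : Fin 6, x ≠ m → ∃ i, f i = x) ∧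
    ∀ u v : Fin 5, u ≠ v → G.Adj (f u) (f v) ∨
      (G.Adj (f u) m ∧ G.Adj m (f v) ∧
        ∀ u' v' : Fin 5, u' ≠ v' →
          (u' = u ∧ v' = v) ∨ (u' = v ∧ v' = u) ∨ G.Adj (f u') (f v'))

-- building a K33 subdivision from a spanning K33 subgraph
lemma csub33_build (G : SimpleGraph (Fin 6)) (h : Q33 G) :
    G.ContainsSubdivision (completeBipartiteGraph (Fin 3) (Fin 3)) := by
  obtain ⟨f, hinj, hadj⟩ := h
  have hA : ∀ u v : Fin 3 ⊕ Fin 3, (completeBipartiteGraph (Fin 3) (Fin 3)).Adj u v →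
      G.Adj (f u) (f v) := by
    rintro (a | a) (b | b) h <;> simp_all
    exact (hadj b a).symm
  refine ⟨⟨f, hinj⟩, fun u v h => Walk.cons (hA u v h) Walk.nil, ?_, ?_, ?_⟩
  · intro u v h
    simp [Walk.isPath_def, (hA u v h).ne]
  · intro u v h x hx
    simp only [Walk.support_cons, Walk.support_nil, List.mem_cons,
      List.not_mem_nil, or_false] at hx
    rcases hx with hx | hx
    · exact Or.inl (hinj hx)
    · exact Or.inr (hinj hx)
  · intro u v u' v' h h' hne x hx hx'
    simp only [Walk.support_cons, Walk.support_nil, List.mem_cons,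
      List.not_mem_nil, or_false] at hx hx'
    exact ⟨hx, hx'⟩

-- extraction for K33
lemma extract33 (G : SimpleGraph (Fin 6))
    (h : G.ContainsSubdivision (completeBipartiteGraph (Fin 3) (Fin 3))) : Q33 G := by
  obtain ⟨f, p, h1, h2, _⟩ := h
  have hbij : Function.Bijective f :=
    (Fintype.bijective_iff_injective_and_card f).2 ⟨f.injective, by simp⟩
  refine ⟨f, f.injective, fun a b => ?_⟩
  have hadj : (completeBipartiteGraph (Fin 3) (Fin 3)).Adj (Sum.inl a) (Sum.inr b) := by simp
  have hne : f (Sum.inl a) ≠ f (Sum.inr b) := f.injective.ne (by simp)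
  have hs : ∀ x ∈ (p hadj).support, x = f (Sum.inl a) ∨ x = f (Sum.inr b) ∨ x = f (Sum.inl a) := by
    intro x hx
    obtain ⟨w, rfl⟩ := hbij.2 x
    rcases h2 hadj w hx with rfl | rfl
    · exact Or.inl rfl
    · exact Or.inr (Or.inl rfl)
  rcases walk_classify hne (p hadj) (h1 hadj) hs with h | ⟨h', _, _, hma, _⟩
  · exact h
  · exact absurd rfl hma

lemma exists_missed (f : Fin 5 → Fin 6) : ∃ m : Fin 6, ∀ i, f i ≠ m := by
  by_contra hc
  push_neg at hc
  have hsurj : Function.Surjective f := by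
    intro m
    obtain ⟨i, hi⟩ := hc m
    exact ⟨i, hi⟩
  have := Fintype.card_le_of_surjective f hsurj
  simp at this

lemma missed_unique (f : Fin 5 → Fin 6) (hinj : Function.Injective f) (m : Fin 6)
    (hm : ∀ i, f i ≠ m) : ∀ x : Fin 6, x ≠ m → ∃ i, f i = x := by
  intro x hx
  by_contra hc
  push_neg at hc
  have himg : (Finset.univ.image f).card = 5 := by
    rw [Finset.card_image_of_injective _ hinj, Finset.card_univ, Fintype.card_fin]
  have hsub : Finset.univ.image f ⊆ Finset.univ \ {x, m} := by
    intro y hy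
    simp only [Finset.mem_image] at hy
    obtain ⟨i, _, rfl⟩ := hy
    simp only [Finset.mem_sdiff, Finset.mem_univ, true_and, Finset.mem_insert,
      Finset.mem_singleton]
    push_neg
    exact ⟨hc i, hm i⟩
  have hcard : (Finset.univ \ ({x, m} : Finset (Fin 6))).card = 4 := by
    rw [Finset.card_sdiff_of_subset (Finset.subset_univ _), Finset.card_univ, Fintype.card_fin,
      Finset.card_insert_of_notMem (by simpa using hx), Finset.card_singleton]
  have := Finset.card_le_card hsub
  omega

lemma extract5 (G : SimpleGraph (Fin 6))
    (h : G.ContainsSubdivision (completeGraph (Fin 5))) : P5 G := by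
  obtain ⟨f, p, h1, h2, h3⟩ := h
  obtain ⟨m, hm⟩ := exists_missed f
  have huniq := missed_unique f f.injective m hm
  have hK : ∀ {u v : Fin 5}, u ≠ v → (completeGraph (Fin 5)).Adj u v := fun h => h
  have hcl : ∀ {u v : Fin 5} (huv : u ≠ v),
      G.Adj (f u) (f v) ∨ (G.Adj (f u) m ∧ G.Adj m (f v) ∧
        m ∈ (p (hK huv)).support) := by
    intro u v huv
    have hs : ∀ x ∈ (p (hK huv)).support, x = f u ∨ x = f v ∨ x = m := by
      intro x hx
      by_cases hxm : x = m
      · exact Or.inr (Or.inr hxm)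
      · obtain ⟨i, rfl⟩ := huniq x hxm
        rcases h2 (hK huv) i hx with rfl | rfl
        · exact Or.inl rfl
        · exact Or.inr (Or.inl rfl)
    rcases walk_classify (f.injective.ne huv) (p (hK huv)) (h1 (hK huv)) hs with
      hh | ⟨ha1, ha2, ha3, _, _⟩
    · exact Or.inl hh
    · exact Or.inr ⟨ha1, ha2, ha3⟩
  refine ⟨f, f.injective, m, hm, huniq, ?_⟩
  intro u v huv
  rcases hcl huv with hh | ⟨ha1, ha2, ha3⟩
  · exact Or.inl hh
  · refine Or.inr ⟨ha1, ha2, ?_⟩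
    intro u' v' huv'
    by_cases hc1 : u' = u ∧ v' = v
    · exact Or.inl hc1
    by_cases hc2 : u' = v ∧ v' = u
    · exact Or.inr (Or.inl hc2)
    refine Or.inr (Or.inr ?_)
    have hsym : s(u, v) ≠ s(u', v') := by
      intro hq
      rw [Sym2.eq_iff] at hq
      rcases hq with ⟨rfl, rfl⟩ | ⟨rfl, rfl⟩
      · exact hc1 ⟨rfl, rfl⟩
      · exact hc2 ⟨rfl, rfl⟩
    rcases hcl huv' with hh | ⟨_, _, hb3⟩
    · exact hh
    · exfalso
      have := h3 (hK huv) (hK huv') hsym m ha3 hb3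
      rcases this.1 with hq | hq
      · exact hm u hq.symm
      · exact hm v hq.symm

lemma notQ33 : ¬ Q33 (pathPower3 6) := by
  rintro ⟨f, hinj, hadj⟩
  have hbij : Function.Bijective f :=
    (Fintype.bijective_iff_injective_and_card f).2 ⟨hinj, by simp⟩
  obtain ⟨w0, h0⟩ := hbij.2 0
  obtain ⟨w1, h1⟩ := hbij.2 1
  obtain ⟨w4, h4⟩ := hbij.2 4
  obtain ⟨w5, h5⟩ := hbij.2 5
  have side : ∀ (x y : Fin 6) (wx wy : Fin 3 ⊕ Fin 3), f wx = x → f wy = y →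
      ¬ (pathPower3 6).Adj x y → wx.isLeft = wy.isLeft := by
    rintro x y (a|a) (b|b) hx hy hna
    · rfl
    · exact absurd (hx ▸ hy ▸ hadj a b) hna
    · exact absurd (hx ▸ hy ▸ (hadj b a).symm) hna
    · rfl
  have hW : ∀ (x y : Fin 6) (wx wy : Fin 3 ⊕ Fin 3), f wx = x → f wy = y → x ≠ y →
      wx ≠ wy := by
    rintro x y wx wy rfl rfl hxy h
    exact hxy (by rw [h])
  have s04 := side 0 4 w0 w4 h0 h4 (by decide)
  have s05 := side 0 5 w0 w5 h0 h5 (by decide)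
  have s15 := side 1 5 w1 w5 h1 h5 (by decide)
  have key : ∀ a b c d : Fin 3, ¬(a ≠ b ∧ a ≠ c ∧ a ≠ d ∧ b ≠ c ∧ b ≠ d ∧ c ≠ d) := by
    decide
  have n01 := hW 0 1 w0 w1 h0 h1 (by decide)
  have n04 := hW 0 4 w0 w4 h0 h4 (by decide)
  have n05 := hW 0 5 w0 w5 h0 h5 (by decide)
  have n14 := hW 1 4 w1 w4 h1 h4 (by decide)
  have n15 := hW 1 5 w1 w5 h1 h5 (by decide)
  have n45 := hW 4 5 w4 w5 h4 h5 (by decide)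
  rcases w0 with a0|a0 <;> rcases w1 with a1|a1 <;> rcases w4 with a4|a4 <;>
    rcases w5 with a5|a5 <;> simp only [Sum.isLeft_inl, Sum.isLeft_inr] at s04 s05 s15
  all_goals try exact absurd s04 (by decide)
  all_goals try exact absurd s05 (by decide)
  all_goals try exact absurd s15 (by decide)
  all_goals exact key a0 a1 a4 a5 ⟨fun h => n01 (by rw [h]), fun h => n04 (by rw [h]),
      fun h => n05 (by rw [h]), fun h => n14 (by rw [h]), fun h => n15 (by rw [h]),
      fun h => n45 (by rw [h])⟩

lemma notP5 : ¬ P5 (pathPower3 6) := by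
  rintro ⟨f, hinj, m, hm, hsurj, hcond⟩
  have hpair : ∀ x y : Fin 6, x ≠ m → y ≠ m → x ≠ y → ¬(pathPower3 6).Adj x y →
      ((pathPower3 6).Adj x m ∧ (pathPower3 6).Adj m y ∧
        ∀ x' y' : Fin 6, x' ≠ m → y' ≠ m → x' ≠ y' →
          (x' = x ∧ y' = y) ∨ (x' = y ∧ y' = x) ∨ (pathPower3 6).Adj x' y') := by
    intro x y hxm hym hxy hna
    obtain ⟨u, rfl⟩ := hsurj x hxm
    obtain ⟨v, rfl⟩ := hsurj y hym
    have huv : u ≠ v := fun h => hxy (by rw [h])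
    rcases hcond u v huv with hh | ⟨ha1, ha2, hinner⟩
    · exact absurd hh hna
    refine ⟨ha1, ha2, ?_⟩
    intro x' y' hx'm hy'm hx'y'
    obtain ⟨u', rfl⟩ := hsurj x' hx'm
    obtain ⟨v', rfl⟩ := hsurj y' hy'm
    have huv' : u' ≠ v' := fun h => hx'y' (by rw [h])
    rcases hinner u' v' huv' with ⟨rfl, rfl⟩ | ⟨rfl, rfl⟩ | hh
    · exact Or.inl ⟨rfl, rfl⟩
    · exact Or.inr (Or.inl ⟨rfl, rfl⟩)
    · exact Or.inr (Or.inr hh)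
  fin_cases m
  · obtain ⟨_, h2, _⟩ := hpair 1 5 (by decide) (by decide) (by decide) (by decide)
    exact absurd h2 (by decide)
  · obtain ⟨_, _, hin⟩ := hpair 0 4 (by decide) (by decide) (by decide) (by decide)
    rcases hin 0 5 (by decide) (by decide) (by decide) with ⟨_, h⟩ | ⟨h, _⟩ | h <;>
      exact absurd h (by decide)
  · obtain ⟨_, _, hin⟩ := hpair 0 4 (by decide) (by decide) (by decide) (by decide)
    rcases hin 0 5 (by decide) (by decide) (by decide) with ⟨_, h⟩ | ⟨h, _⟩ | h <;>
      exact absurd h (by decide)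
  · obtain ⟨_, _, hin⟩ := hpair 0 4 (by decide) (by decide) (by decide) (by decide)
    rcases hin 0 5 (by decide) (by decide) (by decide) with ⟨_, h⟩ | ⟨h, _⟩ | h <;>
      exact absurd h (by decide)
  · obtain ⟨_, _, hin⟩ := hpair 0 5 (by decide) (by decide) (by decide) (by decide)
    rcases hin 1 5 (by decide) (by decide) (by decide) with ⟨h, _⟩ | ⟨_, h⟩ | h <;>
      exact absurd h (by decide)
  · obtain ⟨h1, _, _⟩ := hpair 0 4 (by decide) (by decide) (by decide) (by decide)
    exact absurd h1 (by decide)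

lemma part1 : IsMaxThreeDegenerate (pathPower3 6) 6 := by
  refine ⟨by norm_num, Equiv.refl _, by decide, ?_⟩
  intro i hi
  rw [Nat.card_eq_fintype_card]
  revert hi
  revert i
  decide

def mkIso {G G' : SimpleGraph (Fin 6)} (σ τ : Fin 6 → Fin 6)
    (h1 : ∀ x, τ (σ x) = x) (h2 : ∀ x, σ (τ x) = x)
    (h : ∀ i j, G'.Adj (σ i) (σ j) ↔ G.Adj i j) : G ≃g G' :=
  ⟨⟨σ, τ, h1, h2⟩, h _ _⟩

lemma classify (k a b : Fin 6) (hk : (k : ℕ) < 4) (ha : (a : ℕ) < 5)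
    (hb : (b : ℕ) < 5) (hab : a ≠ b)
    (hpl : ¬ (cand k a b).ContainsSubdivision (completeBipartiteGraph (Fin 3) (Fin 3))) :
    Nonempty ((cand k a b) ≃g pathPower3 6) := by
  have e4 : ∀ x : Fin 6, (x : ℕ) < 4 → x = 0 ∨ x = 1 ∨ x = 2 ∨ x = 3 := by decide
  have e5 : ∀ x : Fin 6, (x : ℕ) < 5 → x = 0 ∨ x = 1 ∨ x = 2 ∨ x = 3 ∨ x = 4 := by decide
  rcases e4 k hk with rfl | rfl | rfl | rfl <;>
    rcases e5 a ha with rfl | rfl | rfl | rfl | rfl <;>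
      rcases e5 b hb with rfl | rfl | rfl | rfl | rfl
  · exact absurd rfl hab
  · exact ⟨mkIso ![0,1,2,3,4,5] ![0,1,2,3,4,5] (by decide) (by decide) (by decide)⟩
  · exact ⟨mkIso ![0,2,1,3,4,5] ![0,2,1,3,4,5] (by decide) (by decide) (by decide)⟩
  · exact ⟨mkIso ![0,2,3,1,4,5] ![0,3,1,2,4,5] (by decide) (by decide) (by decide)⟩
  · exact absurd (csub33_build _ ⟨Sum.elim ![0,4,5] ![1,2,3], by decide, by decide⟩) hpl
  · exact ⟨mkIso ![0,1,2,3,4,5] ![0,1,2,3,4,5] (by decide) (by decide) (by decide)⟩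
  · exact absurd rfl hab
  · exact absurd (csub33_build _ ⟨Sum.elim ![0,3,4] ![1,2,5], by decide, by decide⟩) hpl
  · exact absurd (csub33_build _ ⟨Sum.elim ![0,2,4] ![1,3,5], by decide, by decide⟩) hpl
  · exact ⟨mkIso ![1,4,2,3,5,0] ![5,0,2,3,1,4] (by decide) (by decide) (by decide)⟩
  · exact ⟨mkIso ![0,2,1,3,4,5] ![0,2,1,3,4,5] (by decide) (by decide) (by decide)⟩
  · exact absurd (csub33_build _ ⟨Sum.elim ![0,3,4] ![1,2,5], by decide, by decide⟩) hpl
  · exact absurd rfl hab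
  · exact absurd (csub33_build _ ⟨Sum.elim ![0,1,4] ![2,3,5], by decide, by decide⟩) hpl
  · exact ⟨mkIso ![1,2,4,3,5,0] ![5,0,1,3,2,4] (by decide) (by decide) (by decide)⟩
  · exact ⟨mkIso ![0,2,3,1,4,5] ![0,3,1,2,4,5] (by decide) (by decide) (by decide)⟩
  · exact absurd (csub33_build _ ⟨Sum.elim ![0,2,4] ![1,3,5], by decide, by decide⟩) hpl
  · exact absurd (csub33_build _ ⟨Sum.elim ![0,1,4] ![2,3,5], by decide, by decide⟩) hpl
  · exact absurd rfl hab
  · exact ⟨mkIso ![1,2,3,4,5,0] ![5,0,1,2,3,4] (by decide) (by decide) (by decide)⟩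
  · exact absurd (csub33_build _ ⟨Sum.elim ![0,4,5] ![1,2,3], by decide, by decide⟩) hpl
  · exact ⟨mkIso ![1,4,2,3,5,0] ![5,0,2,3,1,4] (by decide) (by decide) (by decide)⟩
  · exact ⟨mkIso ![1,2,4,3,5,0] ![5,0,1,3,2,4] (by decide) (by decide) (by decide)⟩
  · exact ⟨mkIso ![1,2,3,4,5,0] ![5,0,1,2,3,4] (by decide) (by decide) (by decide)⟩
  · exact absurd rfl hab
  · exact absurd rfl hab
  · exact ⟨mkIso ![1,0,2,3,4,5] ![1,0,2,3,4,5] (by decide) (by decide) (by decide)⟩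
  · exact absurd (csub33_build _ ⟨Sum.elim ![0,2,5] ![1,3,4], by decide, by decide⟩) hpl
  · exact absurd (csub33_build _ ⟨Sum.elim ![0,3,5] ![1,2,4], by decide, by decide⟩) hpl
  · exact ⟨mkIso ![1,4,2,3,0,5] ![4,0,2,3,1,5] (by decide) (by decide) (by decide)⟩
  · exact ⟨mkIso ![1,0,2,3,4,5] ![1,0,2,3,4,5] (by decide) (by decide) (by decide)⟩
  · exact absurd rfl hab
  · exact ⟨mkIso ![2,0,1,3,4,5] ![1,2,0,3,4,5] (by decide) (by decide) (by decide)⟩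
  · exact ⟨mkIso ![2,0,3,1,4,5] ![1,3,0,2,4,5] (by decide) (by decide) (by decide)⟩
  · exact absurd (csub33_build _ ⟨Sum.elim ![0,2,3] ![1,4,5], by decide, by decide⟩) hpl
  · exact absurd (csub33_build _ ⟨Sum.elim ![0,2,5] ![1,3,4], by decide, by decide⟩) hpl
  · exact ⟨mkIso ![2,0,1,3,4,5] ![1,2,0,3,4,5] (by decide) (by decide) (by decide)⟩
  · exact absurd rfl hab
  · exact absurd (csub33_build _ ⟨Sum.elim ![0,1,4] ![2,3,5], by decide, by decide⟩) hpl
  · exact ⟨mkIso ![2,1,4,3,5,0] ![5,1,0,3,2,4] (by decide) (by decide) (by decide)⟩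
  · exact absurd (csub33_build _ ⟨Sum.elim ![0,3,5] ![1,2,4], by decide, by decide⟩) hpl
  · exact ⟨mkIso ![2,0,3,1,4,5] ![1,3,0,2,4,5] (by decide) (by decide) (by decide)⟩
  · exact absurd (csub33_build _ ⟨Sum.elim ![0,1,4] ![2,3,5], by decide, by decide⟩) hpl
  · exact absurd rfl hab
  · exact ⟨mkIso ![2,1,3,4,5,0] ![5,1,0,2,3,4] (by decide) (by decide) (by decide)⟩
  · exact ⟨mkIso ![1,4,2,3,0,5] ![4,0,2,3,1,5] (by decide) (by decide) (by decide)⟩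
  · exact absurd (csub33_build _ ⟨Sum.elim ![0,2,3] ![1,4,5], by decide, by decide⟩) hpl
  · exact ⟨mkIso ![2,1,4,3,5,0] ![5,1,0,3,2,4] (by decide) (by decide) (by decide)⟩
  · exact ⟨mkIso ![2,1,3,4,5,0] ![5,1,0,2,3,4] (by decide) (by decide) (by decide)⟩
  · exact absurd rfl hab
  · exact absurd rfl hab
  · exact absurd (csub33_build _ ⟨Sum.elim ![0,1,5] ![2,3,4], by decide, by decide⟩) hpl
  · exact ⟨mkIso ![1,2,0,3,4,5] ![2,0,1,3,4,5] (by decide) (by decide) (by decide)⟩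
  · exact absurd (csub33_build _ ⟨Sum.elim ![0,3,5] ![1,2,4], by decide, by decide⟩) hpl
  · exact ⟨mkIso ![1,2,4,3,0,5] ![4,0,1,3,2,5] (by decide) (by decide) (by decide)⟩
  · exact absurd (csub33_build _ ⟨Sum.elim ![0,1,5] ![2,3,4], by decide, by decide⟩) hpl
  · exact absurd rfl hab
  · exact ⟨mkIso ![2,1,0,3,4,5] ![2,1,0,3,4,5] (by decide) (by decide) (by decide)⟩
  · exact absurd (csub33_build _ ⟨Sum.elim ![0,2,4] ![1,3,5], by decide, by decide⟩) hpl
  · exact ⟨mkIso ![2,1,4,3,0,5] ![4,1,0,3,2,5] (by decide) (by decide) (by decide)⟩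
  · exact ⟨mkIso ![1,2,0,3,4,5] ![2,0,1,3,4,5] (by decide) (by decide) (by decide)⟩
  · exact ⟨mkIso ![2,1,0,3,4,5] ![2,1,0,3,4,5] (by decide) (by decide) (by decide)⟩
  · exact absurd rfl hab
  · exact ⟨mkIso ![2,3,0,1,4,5] ![2,3,0,1,4,5] (by decide) (by decide) (by decide)⟩
  · exact absurd (csub33_build _ ⟨Sum.elim ![0,1,3] ![2,4,5], by decide, by decide⟩) hpl
  · exact absurd (csub33_build _ ⟨Sum.elim ![0,3,5] ![1,2,4], by decide, by decide⟩) hpl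
  · exact absurd (csub33_build _ ⟨Sum.elim ![0,2,4] ![1,3,5], by decide, by decide⟩) hpl
  · exact ⟨mkIso ![2,3,0,1,4,5] ![2,3,0,1,4,5] (by decide) (by decide) (by decide)⟩
  · exact absurd rfl hab
  · exact ⟨mkIso ![2,3,1,4,5,0] ![5,2,0,1,3,4] (by decide) (by decide) (by decide)⟩
  · exact ⟨mkIso ![1,2,4,3,0,5] ![4,0,1,3,2,5] (by decide) (by decide) (by decide)⟩
  · exact ⟨mkIso ![2,1,4,3,0,5] ![4,1,0,3,2,5] (by decide) (by decide) (by decide)⟩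
  · exact absurd (csub33_build _ ⟨Sum.elim ![0,1,3] ![2,4,5], by decide, by decide⟩) hpl
  · exact ⟨mkIso ![2,3,1,4,5,0] ![5,2,0,1,3,4] (by decide) (by decide) (by decide)⟩
  · exact absurd rfl hab
  · exact absurd rfl hab
  · exact absurd (csub33_build _ ⟨Sum.elim ![0,1,5] ![2,3,4], by decide, by decide⟩) hpl
  · exact absurd (csub33_build _ ⟨Sum.elim ![0,2,5] ![1,3,4], by decide, by decide⟩) hpl
  · exact ⟨mkIso ![1,2,3,0,4,5] ![3,0,1,2,4,5] (by decide) (by decide) (by decide)⟩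
  · exact ⟨mkIso ![1,2,3,4,0,5] ![4,0,1,2,3,5] (by decide) (by decide) (by decide)⟩
  · exact absurd (csub33_build _ ⟨Sum.elim ![0,1,5] ![2,3,4], by decide, by decide⟩) hpl
  · exact absurd rfl hab
  · exact absurd (csub33_build _ ⟨Sum.elim ![0,3,4] ![1,2,5], by decide, by decide⟩) hpl
  · exact ⟨mkIso ![2,1,3,0,4,5] ![3,1,0,2,4,5] (by decide) (by decide) (by decide)⟩
  · exact ⟨mkIso ![2,1,3,4,0,5] ![4,1,0,2,3,5] (by decide) (by decide) (by decide)⟩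
  · exact absurd (csub33_build _ ⟨Sum.elim ![0,2,5] ![1,3,4], by decide, by decide⟩) hpl
  · exact absurd (csub33_build _ ⟨Sum.elim ![0,3,4] ![1,2,5], by decide, by decide⟩) hpl
  · exact absurd rfl hab
  · exact ⟨mkIso ![2,3,1,0,4,5] ![3,2,0,1,4,5] (by decide) (by decide) (by decide)⟩
  · exact ⟨mkIso ![2,3,1,4,0,5] ![4,2,0,1,3,5] (by decide) (by decide) (by decide)⟩
  · exact ⟨mkIso ![1,2,3,0,4,5] ![3,0,1,2,4,5] (by decide) (by decide) (by decide)⟩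
  · exact ⟨mkIso ![2,1,3,0,4,5] ![3,1,0,2,4,5] (by decide) (by decide) (by decide)⟩
  · exact ⟨mkIso ![2,3,1,0,4,5] ![3,2,0,1,4,5] (by decide) (by decide) (by decide)⟩
  · exact absurd rfl hab
  · exact absurd (csub33_build _ ⟨Sum.elim ![0,1,2] ![3,4,5], by decide, by decide⟩) hpl
  · exact ⟨mkIso ![1,2,3,4,0,5] ![4,0,1,2,3,5] (by decide) (by decide) (by decide)⟩
  · exact ⟨mkIso ![2,1,3,4,0,5] ![4,1,0,2,3,5] (by decide) (by decide) (by decide)⟩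
  · exact ⟨mkIso ![2,3,1,4,0,5] ![4,2,0,1,3,5] (by decide) (by decide) (by decide)⟩
  · exact absurd (csub33_build _ ⟨Sum.elim ![0,1,2] ![3,4,5], by decide, by decide⟩) hpl
  · exact absurd rfl hab

/-- `P₆³` is, up to isomorphism, the unique planar maximal 3-degenerate graph of
order 6. -/
theorem stmt17 {V : Type*} (H : SimpleGraph V)
    (hH : IsMaxThreeDegenerate H 6) (hp : IsPlanar H) :
    IsMaxThreeDegenerate (pathPower3 6) 6 ∧ IsPlanar (pathPower3 6) ∧
    Nonempty (H ≃g pathPower3 6) := by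
  obtain ⟨-, v, htri, hdeg⟩ := hH
  have isoGH : (H.comap (v : Fin 6 → V)) ≃g H := ⟨v, Iff.rfl⟩
  obtain ⟨k, a, b, hk, ha, hb, hab, hGeq⟩ :=
    structure_of_deg (G := H.comap (v : Fin 6 → V)) htri hdeg
  have isoHC : H ≃g cand k a b := hGeq ▸ isoGH.symm
  have hpl33 : ¬ (cand k a b).ContainsSubdivision
      (completeBipartiteGraph (Fin 3) (Fin 3)) :=
    fun hc => hp.2 (csub_transfer isoHC.symm hc)
  obtain ⟨ic⟩ := classify k a b hk ha hb hab hpl33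
  exact ⟨part1, ⟨fun h5 => notP5 (extract5 _ h5), fun h33 => notQ33 (extract33 _ h33)⟩,
    ⟨isoHC.trans ic⟩⟩
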